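/- Algebraic core of the projectivity of C^∞(U) over C^∞(M) (Theorem 2): let M be a smooth m-dimensional manifold without boundary and let U ⊆ M be an open set contained in the source of some chart of M. Let π : C^∞(M × U, ℝ) → C^∞(U, ℝ) be the diagonal restriction map, π(f)(t) = f(t, t) for t ∈ U. Then there exists an ℝ-linear map ρ : C^∞(U, ℝ) → C^∞(M × U, ℝ) such that π ∘ ρ = id, and ρ is a morphism of C^∞(M, ℝ)-modules: for every f ∈ C^∞(M, ℝ) and g ∈ C^∞(U, ℝ) one has ρ( (f ∘ ι) · g ) = (f ∘ pr₁) · ρ(g), where ι : U → M is the inclusion and pr₁ : M × U → M is the first projection. -/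

import Mathlib

open TopologicalSpace
open scoped Manifold

noncomputable section

/-- The real vector space `C^∞(N, ℝ)` of smooth real-valued functions on a
manifold `N` (modelled by `I`), as a linear subspace of all functions `N → ℝ`. -/
def SmoothRealFns {E H : Type*} [NormedAddCommGroup E] [NormedSpace ℝ E]
    [TopologicalSpace H] (I : ModelWithCorners ℝ E H)
    (N : Type*) [TopologicalSpace N] [ChartedSpace H N] : Submodule ℝ (N → ℝ) where
  carrier := {f | ContMDiff I 𝓘(ℝ, ℝ) (⊤ : ℕ∞) f}
  add_mem' {a b} (hf : ContMDiff I 𝓘(ℝ, ℝ) (⊤ : ℕ∞) a) (hg : ContMDiff I 𝓘(ℝ, ℝ) (⊤ : ℕ∞) b) := hf.add hg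
  zero_mem' := show ContMDiff I 𝓘(ℝ, ℝ) (⊤ : ℕ∞) (fun _ => (0 : ℝ)) from contMDiff_const
  smul_mem' c f (hf : ContMDiff I 𝓘(ℝ, ℝ) (⊤ : ℕ∞) f) := by
    show ContMDiff I 𝓘(ℝ, ℝ) (⊤ : ℕ∞) (c • f)
    exact contMDiff_const.mul hf

theorem mem_smoothRealFns_iff {E H : Type*} [NormedAddCommGroup E] [NormedSpace ℝ E]
    [TopologicalSpace H] {I : ModelWithCorners ℝ E H}
    {N : Type*} [TopologicalSpace N] [ChartedSpace H N] {f : N → ℝ} :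
    f ∈ SmoothRealFns I N ↔ ContMDiff I 𝓘(ℝ, ℝ) (⊤ : ℕ∞) f := Iff.rfl

/-- Algebraic core of the projectivity of `C^∞(U)` over `C^∞(M)`: for an open set
`U` contained in a chart of a smooth `m`-manifold `M`, the diagonal restriction
`π : C^∞(M × U) → C^∞(U)`, `π(f)(t) = f(t,t)`, has a right inverse `ρ` which is
`ℝ`-linear and is a morphism of `C^∞(M)`-modules:
`ρ((f∘ι)·g) = (f∘pr₁)·ρ(g)` for all `f ∈ C^∞(M)`, `g ∈ C^∞(U)`. -/
theorem exists_module_section_of_diagonal_restriction (m : ℕ) (M : Type*)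
    [TopologicalSpace M] [T2Space M]
    [ChartedSpace (EuclideanSpace ℝ (Fin m)) M]
    [IsManifold (𝓘(ℝ, EuclideanSpace ℝ (Fin m))) (⊤ : ℕ∞) M]
    (U : Opens M)
    (hU : ∃ e ∈ atlas (EuclideanSpace ℝ (Fin m)) M, (U : Set M) ⊆ e.source) :
    ∃ ρ : SmoothRealFns (𝓘(ℝ, EuclideanSpace ℝ (Fin m))) U →ₗ[ℝ]
        SmoothRealFns ((𝓘(ℝ, EuclideanSpace ℝ (Fin m))).prod
          (𝓘(ℝ, EuclideanSpace ℝ (Fin m)))) (M × U),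
      (∀ (g : SmoothRealFns (𝓘(ℝ, EuclideanSpace ℝ (Fin m))) U) (t : U),
        (ρ g : M × U → ℝ) ((t : M), t) = (g : U → ℝ) t) ∧
      (∀ (f : M → ℝ) (hf : ContMDiff (𝓘(ℝ, EuclideanSpace ℝ (Fin m))) 𝓘(ℝ, ℝ) (⊤ : ℕ∞) f)
          (g : SmoothRealFns (𝓘(ℝ, EuclideanSpace ℝ (Fin m))) U),
        ρ ⟨fun t : U => f (t : M) * (g : U → ℝ) t,
            mem_smoothRealFns_iff.mpr
              ((hf.comp contMDiff_subtype_val).mul (mem_smoothRealFns_iff.mp g.2))⟩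
          = ⟨fun p : M × U => f p.1 * (ρ g : M × U → ℝ) p,
            mem_smoothRealFns_iff.mpr
              ((hf.comp contMDiff_fst).mul (mem_smoothRealFns_iff.mp (ρ g).2))⟩) := by
  classical
  obtain ⟨e, heA, heU⟩ := hU
  set E := EuclideanSpace ℝ (Fin m) with hE
  set I : ModelWithCorners ℝ E E := 𝓘(ℝ, EuclideanSpace ℝ (Fin m)) with hI
  -- the image of `U` in the chart
  set V : Set E := e '' (U : Set M) with hV
  have hVo : IsOpen V := e.isOpen_image_of_subset_source U.2 heU
  have hVt : V ⊆ e.target := by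
    rintro y ⟨x, hx, rfl⟩; exact e.map_source (heU hx)
  have hsymmV : ∀ y ∈ V, e.symm y ∈ (U : Set M) := by
    rintro y ⟨x, hx, rfl⟩; rwa [e.left_inv (heU hx)]
  -- instances on `U` needed for partitions of unity
  haveI : LocallyCompactSpace M := ChartedSpace.locallyCompactSpace E M
  haveI : LocallyCompactSpace U := U.2.locallyCompactSpace
  haveI : SecondCountableTopology U :=
    ((Topology.IsEmbedding.subtypeVal).comp
      (e.homeomorphOfImageSubsetSource heU rfl).isEmbedding).secondCountableTopology
  -- smoothness of the chart along `U`
  have hesm : ContMDiff I I (⊤ : ℕ∞) (fun t : U => (e (t : M) : E)) :=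
    (contMDiffOn_of_mem_maximalAtlas
      (IsManifold.subset_maximalAtlas heA)).comp_contMDiff
      contMDiff_subtype_val (fun t => heU t.2)
  -- a smooth positive radius function
  obtain ⟨δ, hδ⟩ : ∃ δ : ContMDiffMap I 𝓘(ℝ, ℝ) U ℝ ((⊤ : ℕ∞) : WithTop ℕ∞),
      ∀ t : U, 0 < δ t ∧ Metric.closedBall (e (t : M)) (δ t) ⊆ V := by
    have := exists_contMDiffMap_forall_mem_convex_of_local (I := I) (n := (⊤ : ℕ∞)) (M := U) (F := ℝ)
      (t := fun t : U => {r : ℝ | 0 < r ∧ Metric.closedBall (e (t : M)) r ⊆ V}) ?_ ?_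
    · obtain ⟨δ, hδ⟩ := this
      exact ⟨δ, fun t => (hδ t : _)⟩
    · intro t
      rw [convex_iff_ordConnected]
      constructor
      intro a ha b hb z hz
      exact ⟨lt_of_lt_of_le ha.1 hz.1,
        (Metric.closedBall_subset_closedBall hz.2).trans hb.2⟩
    · intro t₀
      obtain ⟨ε, hε, hb⟩ := Metric.isOpen_iff.mp hVo (e (t₀ : M)) ⟨t₀, t₀.2, rfl⟩
      refine ⟨(fun t : U => (e (t : M) : E)) ⁻¹' Metric.ball (e (t₀ : M)) (ε / 3),
        (Metric.isOpen_ball.preimage hesm.continuous).mem_nhds (by simp [hε]),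
        fun _ => ε / 3, contMDiffOn_const, ?_⟩
      intro y hy
      refine ⟨by linarith, fun z hz => hb ?_⟩
      have h1 : dist (e (y : M)) (e (t₀ : M)) < ε / 3 := hy
      have h2 : dist z (e (y : M)) ≤ ε / 3 := hz
      have : dist z (e (t₀ : M)) < ε := by
        calc dist z (e (t₀ : M)) ≤ dist z (e (y : M)) + dist (e (y : M)) (e (t₀ : M)) :=
              dist_triangle _ _ _
          _ < ε := by linarith
      exact this
  -- the bump profile
  set β : ℝ → ℝ := fun s => Real.smoothTransition (2 - 8 * s) with hβdef
  have hβ : ContMDiff 𝓘(ℝ, ℝ) 𝓘(ℝ, ℝ) (⊤ : ℕ∞) β :=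
    (Real.smoothTransition.contDiff.comp
      (contDiff_const.sub (contDiff_const.mul contDiff_id))).contMDiff
  have hβ0 : ∀ s : ℝ, 1 / 4 ≤ s → β s = 0 := fun s hs =>
    Real.smoothTransition.zero_of_nonpos (by linarith)
  have hβ1 : β 0 = 1 := Real.smoothTransition.one_of_one_le (by norm_num)
  -- the two-variable bump
  set b : M × U → ℝ :=
    fun p => β (‖(e p.1 : E) - e (p.2 : M)‖ ^ 2 / (δ p.2 * δ p.2)) with hbdef
  -- the section candidate on raw functions
  set ρ₀ : (U → ℝ) → M × U → ℝ :=
    fun g p => if h : p.1 ∈ U then b p * g ⟨p.1, h⟩ else 0 with hρ₀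
  -- key smoothness
  have key : ∀ g : U → ℝ, ContMDiff I 𝓘(ℝ, ℝ) (⊤ : ℕ∞) g →
      ContMDiff (I.prod I) 𝓘(ℝ, ℝ) (⊤ : ℕ∞) (ρ₀ g) := by
    intro g hg p
    by_cases h : p.1 ∈ U
    · -- near points of `U × U`, `ρ₀ g` is given by a smooth formula
      have hg' : ContMDiffAt I 𝓘(ℝ, ℝ) (⊤ : ℕ∞)
          (fun x : M => if hx : x ∈ U then g ⟨x, hx⟩ else 0) p.1 := by
        have heq : (fun t : U => if hx : (t : M) ∈ U then g ⟨(t : M), hx⟩ else 0) = g := by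
          funext t
          rw [dif_pos t.2]
        exact (contMDiffAt_subtype_iff (U := U) (x := ⟨p.1, h⟩)).mp
          (by rw [heq]; exact hg ⟨p.1, h⟩)
      have hA1 : ContMDiffAt (I.prod I) I (⊤ : ℕ∞) (fun q : M × U => (e q.1 : E)) p :=
        (contMDiffAt_of_mem_maximalAtlas
          (IsManifold.subset_maximalAtlas heA) (heU h)).comp p contMDiffAt_fst
      have hA2 : ContMDiffAt (I.prod I) I (⊤ : ℕ∞) (fun q : M × U => (e (q.2 : M) : E)) p :=
        (hesm p.2).comp p contMDiffAt_snd
      have hA3 : ContMDiffAt (I.prod I) 𝓘(ℝ, ℝ) (⊤ : ℕ∞) (fun q : M × U => δ q.2) p :=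
        (δ.contMDiff p.2).comp p contMDiffAt_snd
      have hnum : ContMDiffAt (I.prod I) 𝓘(ℝ, ℝ) (⊤ : ℕ∞)
          (fun q : M × U => ‖(e q.1 : E) - e (q.2 : M)‖ ^ 2) p :=
        ((contDiff_norm_sq ℝ (E := E)).contMDiff (n := ((⊤ : ℕ∞) : WithTop ℕ∞))).contMDiffAt.comp p (hA1.sub hA2)
      have hden : ContMDiffAt (I.prod I) 𝓘(ℝ, ℝ) (⊤ : ℕ∞) (fun q : M × U => δ q.2 * δ q.2) p :=
        hA3.mul hA3
      have hdenne : δ p.2 * δ p.2 ≠ 0 := by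
        have := (hδ p.2).1; positivity
      have hbat : ContMDiffAt (I.prod I) 𝓘(ℝ, ℝ) (⊤ : ℕ∞) b p :=
        hβ.contMDiffAt.comp p (hnum.div₀ hden hdenne)
      have hform : ContMDiffAt (I.prod I) 𝓘(ℝ, ℝ) (⊤ : ℕ∞)
          (fun q : M × U => b q * (if hx : q.1 ∈ U then g ⟨q.1, hx⟩ else 0)) p :=
        hbat.mul (hg'.comp p contMDiffAt_fst)
      refine hform.congr_of_eventuallyEq ?_
      have hmem : ((U : Set M) ×ˢ (Set.univ : Set U)) ∈ nhds p :=
        prod_mem_nhds (U.2.mem_nhds h) Filter.univ_mem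
      filter_upwards [hmem] with q hq
      have hq1 : q.1 ∈ U := hq.1
      rw [hρ₀]
      simp only
      rw [dif_pos hq1, dif_pos hq1]
    · -- near points outside `U`, `ρ₀ g` vanishes
      have hr := (hδ p.2).1
      have hK0V : Metric.closedBall (e (p.2 : M)) (δ p.2) ⊆ V := (hδ p.2).2
      have hKcpt : IsCompact (e.symm '' Metric.closedBall (e (p.2 : M)) (δ p.2)) :=
        (isCompact_closedBall _ _).image_of_continuousOn
          (e.continuousOn_symm.mono (hK0V.trans hVt))
      have hKU : e.symm '' Metric.closedBall (e (p.2 : M)) (δ p.2) ⊆ (U : Set M) := by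
        rintro x ⟨y, hy, rfl⟩; exact hsymmV y (hK0V hy)
      have hpK : p.1 ∉ e.symm '' Metric.closedBall (e (p.2 : M)) (δ p.2) :=
        fun hx => h (hKU hx)
      have hNopen : IsOpen {t : U | δ t < 5 / 4 * δ p.2 ∧
          ‖(e (t : M) : E) - e (p.2 : M)‖ < δ p.2 / 4} := by
        apply IsOpen.and
        · exact isOpen_Iio.preimage δ.contMDiff.continuous
        · exact isOpen_Iio.preimage ((hesm.continuous.sub continuous_const).norm)
      have hN : {t : U | δ t < 5 / 4 * δ p.2 ∧
          ‖(e (t : M) : E) - e (p.2 : M)‖ < δ p.2 / 4} ∈ nhds p.2 := by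
        refine hNopen.mem_nhds ⟨by linarith, by simp [hr]⟩
      have hnbhd : ((e.symm '' Metric.closedBall (e (p.2 : M)) (δ p.2))ᶜ ×ˢ
          {t : U | δ t < 5 / 4 * δ p.2 ∧ ‖(e (t : M) : E) - e (p.2 : M)‖ < δ p.2 / 4})
          ∈ nhds p :=
        prod_mem_nhds (hKcpt.isClosed.isOpen_compl.mem_nhds hpK) hN
      refine (contMDiffAt_const (c := (0 : ℝ))).congr_of_eventuallyEq ?_
      filter_upwards [hnbhd] with q hq
      obtain ⟨hq1, hq2⟩ := hq
      by_cases hx : q.1 ∈ U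
      · rw [hρ₀]
        simp only
        rw [dif_pos hx]
        by_cases hlt : ‖(e q.1 : E) - e (q.2 : M)‖ < δ q.2 / 2
        · exfalso
          apply hq1
          have hmem : e q.1 ∈ Metric.closedBall (e (p.2 : M)) (δ p.2) := by
            rw [Metric.mem_closedBall, dist_eq_norm]
            calc ‖(e q.1 : E) - e (p.2 : M)‖
                ≤ ‖(e q.1 : E) - e (q.2 : M)‖ + ‖(e (q.2 : M) : E) - e (p.2 : M)‖ := by
                  have := norm_sub_le_norm_sub_add_norm_sub (e q.1 : E) (e (q.2 : M))
                    (e (p.2 : M))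
                  exact this
              _ ≤ δ p.2 := by
                  have h1 := hq2.1
                  have h2 := hq2.2
                  linarith
          refine ⟨e q.1, hmem, ?_⟩
          exact e.left_inv (heU hx)
        · push_neg at hlt
          have hb0 : b q = 0 := by
            apply hβ0
            rw [le_div_iff₀ (by have := (hδ q.2).1; positivity)]
            have hnn : (0 : ℝ) ≤ ‖(e q.1 : E) - e (q.2 : M)‖ := norm_nonneg _
            have hd := (hδ q.2).1
            nlinarith
          rw [hb0, zero_mul]
      · rw [hρ₀]
        simp only
        rw [dif_neg hx]
  -- assemble the linear map
  refine ⟨{ toFun := fun g => ⟨ρ₀ (g : U → ℝ), key _ g.2⟩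
            map_add' := ?_
            map_smul' := ?_ }, ?_, ?_⟩
  · intro g g'
    apply Subtype.ext
    funext p
    show ρ₀ ((g : U → ℝ) + (g' : U → ℝ)) p = ρ₀ (g : U → ℝ) p + ρ₀ (g' : U → ℝ) p
    by_cases h : p.1 ∈ U
    · simp only [hρ₀, dif_pos h, Pi.add_apply]
      ring
    · simp only [hρ₀, dif_neg h, add_zero]
  · intro c g
    apply Subtype.ext
    funext p
    show ρ₀ (c • (g : U → ℝ)) p = c * ρ₀ (g : U → ℝ) p
    by_cases h : p.1 ∈ U
    · simp only [hρ₀, dif_pos h, Pi.smul_apply, smul_eq_mul]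
      ring
    · simp only [hρ₀, dif_neg h, mul_zero]
  · intro g t
    show ρ₀ (g : U → ℝ) ((t : M), t) = (g : U → ℝ) t
    rw [hρ₀]
    simp only
    rw [dif_pos t.2]
    have hb1 : b ((t : M), t) = 1 := by
      rw [hbdef]
      simp only
      rw [sub_self]
      simp [hβ1]
    rw [hb1, one_mul, Subtype.coe_eta]
  · intro f hf g
    apply Subtype.ext
    funext p
    show ρ₀ (fun t : U => f (t : M) * (g : U → ℝ) t) p = f p.1 * ρ₀ (g : U → ℝ) p
    by_cases h : p.1 ∈ U
    · simp only [hρ₀, dif_pos h]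
      ring
    · simp only [hρ₀, dif_neg h, mul_zero]

end
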